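/- arXiv:1804.06126 — 2 statements merged into one kernel-verified Lean document; each statement's English description precedes it below -/
import Mathlib

section
/- Let F and G be linear subspaces of ℝⁿ with F ∩ G = {0}, and let θ = ∠(F,G) be the minimal angle between a nonzero vector of F and a nonzero vector of G (so cos θ < 1). Then for every x ∈ F ⊕ G written as x = x_F + x_G with x_F ∈ F and x_G ∈ G, one has ‖x_F‖ + ‖x_G‖ ≤ (2/(1 - cos θ))^{1/2} · ‖x‖, where ‖·‖ is the Euclidean norm. -/
/-- Inverse triangle inequality controlled by the angle between two subspaces. -/
theorem stmt0 {n : ℕ} (F G : Submodule ℝ (EuclideanSpace ℝ (Fin n)))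
    (hFG : F ⊓ G = ⊥)
    (c : ℝ)
    (hc : c = sSup {r : ℝ | ∃ u ∈ F, ∃ v ∈ G, ‖u‖ = 1 ∧ ‖v‖ = 1 ∧ r = (inner ℝ u v : ℝ)})
    (hclt : c < 1)
    (xF xG : EuclideanSpace ℝ (Fin n)) (hxF : xF ∈ F) (hxG : xG ∈ G) :
    ‖xF‖ + ‖xG‖ ≤ Real.sqrt (2 / (1 - c)) * ‖xF + xG‖ := by
  set S : Set ℝ := {r : ℝ | ∃ u ∈ F, ∃ v ∈ G, ‖u‖ = 1 ∧ ‖v‖ = 1 ∧ r = (inner ℝ u v : ℝ)} with hS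
  have hbdd : BddAbove S := by
    refine ⟨1, ?_⟩
    rintro r ⟨u, hu, v, hv, h1, h2, rfl⟩
    calc (inner ℝ u v : ℝ) ≤ ‖u‖ * ‖v‖ := real_inner_le_norm u v
    _ = 1 := by rw [h1, h2]; ring
  have key : ∀ u v : EuclideanSpace ℝ (Fin n), u ∈ F → v ∈ G →
      (inner ℝ u v : ℝ) ≤ c * (‖u‖ * ‖v‖) := by
    intro u v hu hv
    by_cases hu0 : u = 0
    · simp [hu0]
    by_cases hv0 : v = 0
    · simp [hv0]
    have hun : ‖u‖ ≠ 0 := norm_ne_zero_iff.mpr hu0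
    have hvn : ‖v‖ ≠ 0 := norm_ne_zero_iff.mpr hv0
    have hmem : (inner ℝ ((‖u‖⁻¹ : ℝ) • u) ((‖v‖⁻¹ : ℝ) • v) : ℝ) ∈ S := by
      refine ⟨(‖u‖⁻¹ : ℝ) • u, F.smul_mem _ hu, (‖v‖⁻¹ : ℝ) • v, G.smul_mem _ hv, ?_, ?_, rfl⟩
      · rw [norm_smul]; simp [abs_of_nonneg (inv_nonneg.mpr (norm_nonneg u)), hun]
      · rw [norm_smul]; simp [abs_of_nonneg (inv_nonneg.mpr (norm_nonneg v)), hvn]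
    have hle : (inner ℝ ((‖u‖⁻¹ : ℝ) • u) ((‖v‖⁻¹ : ℝ) • v) : ℝ) ≤ c := hc ▸ le_csSup hbdd hmem
    rw [real_inner_smul_left, real_inner_smul_right] at hle
    have hup : (0:ℝ) < ‖u‖ := lt_of_le_of_ne (norm_nonneg u) (Ne.symm hun)
    have hvp : (0:ℝ) < ‖v‖ := lt_of_le_of_ne (norm_nonneg v) (Ne.symm hvn)
    have := mul_le_mul_of_nonneg_left hle (le_of_lt (mul_pos hup hvp))
    calc (inner ℝ u v : ℝ) = ‖u‖ * ‖v‖ * (‖u‖⁻¹ * (‖v‖⁻¹ * inner ℝ u v)) := by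
          field_simp
    _ ≤ ‖u‖ * ‖v‖ * c := this
    _ = c * (‖u‖ * ‖v‖) := by ring
  have hc0 : 0 ≤ c := by
    by_cases hne : S.Nonempty
    · obtain ⟨r, hr⟩ := hne
      have hA : r ≤ c := hc ▸ le_csSup hbdd hr
      obtain ⟨u, hu, v, hv, h1, h2, rfl⟩ := hr
      have hmem' : (-(inner ℝ u v : ℝ)) ∈ S := by
        refine ⟨u, hu, -v, G.neg_mem hv, h1, by simp [h2], by
          rw [inner_neg_right]⟩
      have hB : (-(inner ℝ u v : ℝ)) ≤ c := hc ▸ le_csSup hbdd hmem'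
      linarith
    · rw [Set.not_nonempty_iff_eq_empty] at hne
      rw [hc, hne, Real.sSup_empty]
  set a := ‖xF‖ with ha
  set b := ‖xG‖ with hb
  have hip : -(c * (a * b)) ≤ (inner ℝ xF xG : ℝ) := by
    have := key xF (-xG) hxF (G.neg_mem hxG)
    rw [inner_neg_right, norm_neg] at this
    linarith
  have hsq : ‖xF + xG‖ ^ 2 = a ^ 2 + 2 * (inner ℝ xF xG : ℝ) + b ^ 2 := by
    rw [← real_inner_self_eq_norm_sq, inner_add_add_self, real_inner_self_eq_norm_sq,
      real_inner_self_eq_norm_sq, real_inner_comm xG xF]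
    ring
  have hmain : (1 - c) * (a + b) ^ 2 ≤ 2 * ‖xF + xG‖ ^ 2 := by
    nlinarith [mul_nonneg hc0 (sq_nonneg (a - b)), sq_nonneg (a - b)]
  have h1c : (0:ℝ) < 1 - c := by linarith
  set s := Real.sqrt (2 / (1 - c)) with hs
  have hs2 : s ^ 2 = 2 / (1 - c) := Real.sq_sqrt (by positivity)
  have hsnn : 0 ≤ s := Real.sqrt_nonneg _
  have hsqle : (a + b) ^ 2 ≤ (s * ‖xF + xG‖) ^ 2 := by
    have : (s * ‖xF + xG‖) ^ 2 = (2 / (1 - c)) * ‖xF + xG‖ ^ 2 := by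
      rw [mul_pow, hs2]
    rw [this]
    rw [div_mul_eq_mul_div, le_div_iff₀ h1c]
    nlinarith [hmain]
  have habnn : 0 ≤ a + b := by positivity
  have := Real.sqrt_le_sqrt hsqle
  rwa [Real.sqrt_sq habnn, Real.sqrt_sq (by positivity)] at this
end

section
/- Let A be an n×n real matrix and let ℝⁿ = ⊕_{i=1}^r E_i be the decomposition of ℝⁿ into the generalized eigenspaces of A (i.e. E_i = ker((A − μ_i Id)^{d_i}) over the real forms of the complex generalized eigenspaces). Define the angle ∠(E_1,…,E_r) = min_{1≤j≤r} ∠(E_j, ⊕_{i≠j} E_i) and κ(A) = (2/(1 − cos ∠(E_1,…,E_r)))^{(r−1)/2}. Then for every x ∈ ℝⁿ written as x = Σ_{i=1}^r x_i with x_i ∈ E_i, one has Σ_{i=1}^r ‖x_i‖ ≤ κ(A) · ‖x‖. -/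
/-- Inverse triangle inequality for the decomposition of `ℝⁿ` into the generalized
eigenspaces of a matrix `A`, with constant `κ(A) = (2/(1 - cos ∠(E₁,…,E_r)))^{(r-1)/2}`. -/
theorem stmt3 {n r : ℕ} (hr : 0 < r)
    (A : EuclideanSpace ℝ (Fin n) →L[ℝ] EuclideanSpace ℝ (Fin n))
    (E : Fin r → Submodule ℝ (EuclideanSpace ℝ (Fin n)))
    -- the `E i` are the generalized eigenspaces of `A`: they are `A`-invariant …
    (hinv : ∀ i, ∀ x ∈ E i, A x ∈ E i)
    -- … and they decompose `ℝⁿ` as a direct sum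
    (hspan : (⨆ i, E i) = ⊤) (hindep : iSupIndep E)
    -- cosine of the angle between `E j` and the sum of the other spaces
    (c : Fin r → ℝ)
    (hc : ∀ j, c j = sSup {t : ℝ | ∃ u ∈ E j, ∃ v ∈ (⨆ (i) (_ : i ≠ j), E i),
      ‖u‖ = 1 ∧ ‖v‖ = 1 ∧ t = (inner ℝ u v : ℝ)})
    (cmax : ℝ) (hcmax : IsGreatest (Set.range c) cmax) (hcm1 : cmax < 1)
    (x : Fin r → EuclideanSpace ℝ (Fin n)) (hx : ∀ i, x i ∈ E i) :
    ∑ i, ‖x i‖ ≤ (2 / (1 - cmax)) ^ (((r : ℝ) - 1) / 2) * ‖∑ i, x i‖ := by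
  set K : ℝ := 2 / (1 - cmax) with hKdef
  -- the sets defining `c j` are bounded above by `1`
  have hbdd : ∀ j, BddAbove {t : ℝ | ∃ u ∈ E j, ∃ v ∈ (⨆ (i) (_ : i ≠ j), E i),
      ‖u‖ = 1 ∧ ‖v‖ = 1 ∧ t = (inner ℝ u v : ℝ)} := by
    intro j
    refine ⟨1, ?_⟩
    rintro t ⟨u, hu, v, hv, hu1, hv1, rfl⟩
    calc (inner ℝ u v : ℝ) ≤ ‖u‖ * ‖v‖ := real_inner_le_norm u v
      _ = 1 := by rw [hu1, hv1]; ring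
  -- `cmax ≥ -1`
  have hcub : -1 ≤ cmax := by
    obtain ⟨j, hj⟩ := hcmax.1
    rw [← hj, hc j]
    by_cases hne : {t : ℝ | ∃ u ∈ E j, ∃ v ∈ (⨆ (i) (_ : i ≠ j), E i),
        ‖u‖ = 1 ∧ ‖v‖ = 1 ∧ t = (inner ℝ u v : ℝ)}.Nonempty
    · obtain ⟨t, ht⟩ := hne
      have h1 : -1 ≤ t := by
        obtain ⟨u, hu, v, hv, hu1, hv1, rfl⟩ := ht
        have := real_inner_le_norm u (-v)
        have h2 : (inner ℝ u (-v) : ℝ) = -(inner ℝ u v : ℝ) := inner_neg_right u v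
        rw [h2, hu1] at this
        simp only [norm_neg] at this
        rw [hv1] at this
        linarith
      exact le_trans h1 (le_csSup (hbdd j) ht)
    · rw [Set.not_nonempty_iff_eq_empty] at hne
      rw [hne, Real.sSup_empty]
      norm_num
  have hKpos : 0 < K := div_pos two_pos (by linarith)
  have hK1 : (1 : ℝ) ≤ K := by
    rw [hKdef, le_div_iff₀ (by linarith)]
    linarith
  -- key angle estimate
  have key : ∀ j, ∀ u ∈ E j, ∀ v ∈ (⨆ (i) (_ : i ≠ j), E i),
      (inner ℝ u v : ℝ) ≤ cmax * (‖u‖ * ‖v‖) := by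
    intro j u hu v hv
    rcases eq_or_ne u 0 with rfl | hu0
    · simp
    rcases eq_or_ne v 0 with rfl | hv0
    · simp
    have hun : (0:ℝ) < ‖u‖ := norm_pos_iff.2 hu0
    have hvn : (0:ℝ) < ‖v‖ := norm_pos_iff.2 hv0
    set u' := (‖u‖⁻¹) • u with hu'
    set v' := (‖v‖⁻¹) • v with hv'
    have hmem : (inner ℝ u' v' : ℝ) ∈ {t : ℝ | ∃ u ∈ E j, ∃ v ∈ (⨆ (i) (_ : i ≠ j), E i),
        ‖u‖ = 1 ∧ ‖v‖ = 1 ∧ t = (inner ℝ u v : ℝ)} := by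
      refine ⟨u', Submodule.smul_mem _ _ hu, v', Submodule.smul_mem _ _ hv, ?_, ?_, rfl⟩
      · rw [hu', norm_smul, norm_inv, norm_norm, inv_mul_cancel₀ (ne_of_gt hun)]
      · rw [hv', norm_smul, norm_inv, norm_norm, inv_mul_cancel₀ (ne_of_gt hvn)]
    have h1 : (inner ℝ u' v' : ℝ) ≤ c j := by
      rw [hc j]; exact le_csSup (hbdd j) hmem
    have hcj : c j ≤ cmax := hcmax.2 ⟨j, rfl⟩
    have h2 : (inner ℝ u v : ℝ) = ‖u‖ * ‖v‖ * (inner ℝ u' v' : ℝ) := by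
      rw [hu', hv', real_inner_smul_left, real_inner_smul_right]
      field_simp
    have h3 : (inner ℝ u' v' : ℝ) ≤ cmax := le_trans h1 hcj
    rw [h2]
    have h4 : (0:ℝ) < ‖u‖ * ‖v‖ := mul_pos hun hvn
    nlinarith
  -- the pair inequality
  have pair : ∀ j, ∀ u ∈ E j, ∀ v ∈ (⨆ (i) (_ : i ≠ j), E i),
      ‖u‖ + ‖v‖ ≤ Real.sqrt K * ‖u + v‖ := by
    intro j u hu v hv
    have h1 : (inner ℝ u (-v) : ℝ) ≤ cmax * (‖u‖ * ‖-v‖) :=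
      key j u hu (-v) (Submodule.neg_mem _ hv)
    rw [inner_neg_right, norm_neg] at h1
    have h2 : ‖u + v‖^2 = ‖u‖^2 + 2 * (inner ℝ u v : ℝ) + ‖v‖^2 := norm_add_sq_real u v
    have h3 : (1 - cmax)/2 * (‖u‖ + ‖v‖)^2 ≤ ‖u + v‖^2 := by
      nlinarith [sq_nonneg (‖u‖ - ‖v‖), norm_nonneg u, norm_nonneg v,
        mul_nonneg (norm_nonneg u) (norm_nonneg v)]
    have h4 : (‖u‖ + ‖v‖)^2 ≤ K * ‖u + v‖^2 := by
      rw [hKdef]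
      rw [div_mul_eq_mul_div, le_div_iff₀ (by linarith : (0:ℝ) < 1 - cmax)]
      nlinarith
    calc ‖u‖ + ‖v‖ = Real.sqrt ((‖u‖ + ‖v‖)^2) := (Real.sqrt_sq (by positivity)).symm
      _ ≤ Real.sqrt (K * ‖u + v‖^2) := Real.sqrt_le_sqrt h4
      _ = Real.sqrt K * ‖u + v‖ := by
          rw [Real.sqrt_mul (le_of_lt hKpos), Real.sqrt_sq (norm_nonneg _)]
  -- main induction over finsets
  have main : ∀ (s : Finset (Fin r)) (hs : s.Nonempty),
      ∑ i ∈ s, ‖x i‖ ≤ K ^ (((s.card : ℝ) - 1) / 2) * ‖∑ i ∈ s, x i‖ := by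
    intro s hs
    induction hs using Finset.Nonempty.cons_induction with
    | singleton a => simp
    | cons a s ha hs ih =>
      set y := ∑ i ∈ s, x i with hy
      have hymem : y ∈ (⨆ (i) (_ : i ≠ a), E i) := by
        refine Submodule.sum_mem _ (fun i hi => ?_)
        have hia : i ≠ a := fun h => ha (h ▸ hi)
        exact Submodule.mem_iSup_of_mem i (Submodule.mem_iSup_of_mem hia (hx i))
      have hp := pair a (x a) (hx a) y hymem
      set e : ℝ := ((s.card : ℝ) - 1) / 2 with he
      have hcard1 : (1:ℝ) ≤ (s.card : ℝ) := by
        exact_mod_cast Nat.one_le_iff_ne_zero.2 (Finset.card_ne_zero_of_mem hs.choose_spec)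
      have hKe0 : (0:ℝ) ≤ K ^ e := Real.rpow_nonneg (le_of_lt hKpos) e
      have hKe1 : (1:ℝ) ≤ K ^ e :=
        Real.one_le_rpow hK1 (by rw [he]; linarith)
      have hexp : (((Finset.cons a s ha).card : ℝ) - 1) / 2 = e + 1/2 := by
        rw [Finset.card_cons, he]
        push_cast
        ring
      have hKsplit : K ^ ((((Finset.cons a s ha).card : ℝ) - 1) / 2)
          = K ^ e * Real.sqrt K := by
        rw [hexp, Real.rpow_add hKpos, Real.sqrt_eq_rpow]
      rw [Finset.sum_cons, Finset.sum_cons, hKsplit, ← hy]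
      have h3 : K ^ e * (‖x a‖ + ‖y‖) ≤ K ^ e * (Real.sqrt K * ‖x a + y‖) :=
        mul_le_mul_of_nonneg_left hp hKe0
      have h4 : ∑ i ∈ s, ‖x i‖ ≤ K ^ e * ‖y‖ := ih
      have h5 : (0:ℝ) ≤ ‖x a‖ := norm_nonneg _
      nlinarith [norm_nonneg y]
  have huniv : (Finset.univ : Finset (Fin r)).Nonempty := by
    have : Nonempty (Fin r) := ⟨⟨0, hr⟩⟩
    exact Finset.univ_nonempty
  have := main Finset.univ huniv
  simpa [Finset.card_univ] using this
end
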